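/- If ν* : S → ℝ is a global minimizer of L and ν̃* : S → ℝ is a global minimizer of 𝓛̃, then the optimal objective values coincide: L(ν*) = 𝓛̃(ν̃*). -/

import Mathlib

/-- If `ν*` minimizes `L` and `ν̃*` minimizes `𝓛̃`, then `L(ν*) = 𝓛̃(ν̃*)`. -/
theorem stmt_12 {S X : Type*} [Fintype S] [Fintype X] [Nonempty S] [Nonempty X]
    (α γ : ℝ) (hα : 0 < α) (hγ0 : 0 < γ) (hγ1 : γ < 1)
    (c : X → ℝ) (hc : ∀ x, 0 ≤ c x) (hc0 : ∃ x₀, 0 < c x₀)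
    (st st' : X → S) (e₀ : X → ℝ)
    (p₀ : S → ℝ) (hp₀ : ∀ s, 0 ≤ p₀ s) (hp₀sum : ∑ s, p₀ s = 1)
    (ehat : (S → ℝ) → X → ℝ)
    (hehat : ∀ (ν : S → ℝ) (x : X), ehat ν x = e₀ x + γ * ν (st' x) - ν (st x))
    (Z : (S → ℝ) → ℝ)
    (hZ : ∀ ν : S → ℝ, Z ν = ∑ x, c x * Real.exp (ehat ν x / α))
    (L : (S → ℝ) → ℝ)
    (hL : ∀ ν : S → ℝ,
      L ν = (1 - γ) * ∑ s, p₀ s * ν s + α * ∑ x, c x * Real.exp (ehat ν x / α - 1))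
    (Ltil : (S → ℝ) → ℝ)
    (hLtil : ∀ ν : S → ℝ,
      Ltil ν = (1 - γ) * ∑ s, p₀ s * ν s + α * Real.log (Z ν))
    (νstar : S → ℝ) (hνstar : ∀ ν : S → ℝ, L νstar ≤ L ν)
    (νtil : S → ℝ) (hνtil : ∀ ν : S → ℝ, Ltil νtil ≤ Ltil ν) :
    L νstar = Ltil νtil := by
  have hZpos : ∀ ν : S → ℝ, 0 < Z ν := by
    intro ν
    rw [hZ]
    obtain ⟨x₀, hx₀⟩ := hc0
    apply Finset.sum_pos'
    · intro x _; exact mul_nonneg (hc x) (Real.exp_pos _).le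
    · exact ⟨x₀, Finset.mem_univ _, mul_pos hx₀ (Real.exp_pos _)⟩
  -- L ν ≥ Ltil ν for all ν
  have hGE : ∀ ν, Ltil ν ≤ L ν := by
    intro ν
    rw [hL, hLtil]
    have h1 : ∑ x, c x * Real.exp (ehat ν x / α - 1) = Z ν * Real.exp (-1) := by
      rw [hZ, Finset.sum_mul]
      refine Finset.sum_congr rfl fun x _ => ?_
      rw [sub_eq_add_neg, Real.exp_add, mul_assoc]
    rw [h1]
    have hz := hZpos ν
    have hlog : Real.log (Z ν) ≤ Z ν * Real.exp (-1) := by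
      have h := Real.log_le_sub_one_of_pos (mul_pos hz (Real.exp_pos (-1)))
      rw [Real.log_mul (ne_of_gt hz) (Real.exp_ne_zero _), Real.log_exp] at h
      linarith
    have := mul_le_mul_of_nonneg_left hlog hα.le
    linarith
  set C : ℝ := α * (Real.log (Z νtil) - 1) / (1 - γ) with hCdef
  have hγ' : (0:ℝ) < 1 - γ := by linarith
  have hCval : (1 - γ) * C = α * (Real.log (Z νtil) - 1) := by
    rw [hCdef]; field_simp
  have hLshift : L (fun s => νtil s + C) = Ltil νtil := by
    rw [hL, hLtil]
    have hterm : ∀ x, c x * Real.exp (ehat (fun s => νtil s + C) x / α - 1)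
        = c x * Real.exp (ehat νtil x / α) * (Z νtil)⁻¹ := by
      intro x
      have he : ehat (fun s => νtil s + C) x = ehat νtil x + (γ - 1) * C := by
        rw [hehat, hehat]; ring
      have hexp : ehat (fun s => νtil s + C) x / α - 1 = ehat νtil x / α - Real.log (Z νtil) := by
        rw [he]
        have : (γ - 1) * C = -(α * (Real.log (Z νtil) - 1)) := by linarith [hCval]
        field_simp [this]
        linarith [this]
      rw [hexp, Real.exp_sub, Real.exp_log (hZpos νtil)]
      ring
    have hsum2 : ∑ x, c x * Real.exp (ehat (fun s => νtil s + C) x / α - 1) = 1 := by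
      rw [Finset.sum_congr rfl fun x _ => hterm x, ← Finset.sum_mul, ← hZ]
      exact mul_inv_cancel₀ (ne_of_gt (hZpos νtil))
    have hsum1 : ∑ s, p₀ s * (νtil s + C) = (∑ s, p₀ s * νtil s) + C := by
      simp [mul_add, Finset.sum_add_distrib, ← Finset.sum_mul, hp₀sum]
    rw [hsum2, hsum1]
    have : (1 - γ) * ((∑ s, p₀ s * νtil s) + C)
        = (1 - γ) * (∑ s, p₀ s * νtil s) + α * (Real.log (Z νtil) - 1) := by
      rw [mul_add, hCval]
    rw [this]; ring
  have h1 := hνstar (fun s => νtil s + C)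
  have h2 := hνtil νstar
  have h3 := hGE νstar
  linarith [hLshift ▸ h1]
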